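/- For all real x ≥ 1 and all real a ≥ 0.627, the function f(x) = (1 - e^{-a x}) / ln(1 + x) is strictly decreasing in x; equivalently, its derivative is strictly negative on [1, ∞). -/

import Mathlib

set_option maxHeartbeats 1000000

/-- Key inequality: for `a ≥ 0.627` and `x ≥ 1`,
`a * (1 + x) * log (1 + x) < exp (a * x) - 1`. -/
lemma key_ineq (a x : ℝ) (ha : 0.627 ≤ a) (hx : 1 ≤ x) :
    a * (1 + x) * Real.log (1 + x) < Real.exp (a * x) - 1 := by
  have ha0 : (0:ℝ) < a := by norm_num at ha ⊢; linarith
  have hx0 : (0:ℝ) < 1 + x := by linarith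
  -- log bound: log (1+x) ≤ log 2 + (x-1)/2 ≤ 0.6931472 + (x-1)/2
  have h1 : (0:ℝ) < (1 + x) / 2 := by linarith
  have h2 : Real.log ((1 + x) / 2) ≤ (1 + x) / 2 - 1 := Real.log_le_sub_one_of_pos h1
  have h3 : Real.log (1 + x) = Real.log 2 + Real.log ((1 + x) / 2) := by
    rw [← Real.log_mul (by norm_num) (ne_of_gt h1)]
    ring_nf
  have hL2 : Real.log 2 < 0.6931472 := by
    have := Real.log_two_lt_d9
    norm_num at this ⊢
    linarith
  have hL : Real.log (1 + x) ≤ 0.6931472 + (x - 1) / 2 := by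
    norm_num at hL2 ⊢
    nlinarith
  -- Taylor bound for exp
  have hax : 0 ≤ a * x := by positivity
  have hexp : 1 + a * x + (a*x)^2/2 + (a*x)^3/6 + (a*x)^4/24 ≤ Real.exp (a * x) := by
    have h := Real.sum_le_exp_of_nonneg hax 5
    have heq : ∑ i ∈ Finset.range 5, (a*x) ^ i / (Nat.factorial i : ℝ)
        = 1 + a * x + (a*x)^2/2 + (a*x)^3/6 + (a*x)^4/24 := by
      simp [Finset.sum_range_succ, Nat.factorial]
      try ring
    linarith [heq ▸ h]
  -- monotonicity in a of the Taylor terms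
  have hx2 : (0:ℝ) ≤ x^2 := sq_nonneg x
  have hx3 : (0:ℝ) ≤ x^3 := by positivity
  have hx4 : (0:ℝ) ≤ x^4 := by positivity
  have hA2 : a * 0.627 * x^2 ≤ a^2 * x^2 := by nlinarith
  have hA3 : a * 0.627^2 * x^3 ≤ a^3 * x^3 := by nlinarith [sq_nonneg (a - 0.627)]
  have hA4 : a * 0.627^3 * x^4 ≤ a^4 * x^4 := by
    nlinarith [sq_nonneg (a - 0.627), sq_nonneg (a + 0.627), mul_pos ha0 ha0]
  -- polynomial positivity
  have hQ : (1 + x) * (0.6931472 + (x - 1) / 2)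
      < x + 0.627 * x^2 / 2 + 0.627^2 * x^3 / 6 + 0.627^3 * x^4 / 24 := by
    have hy : (0:ℝ) ≤ x - 1 := by linarith
    nlinarith [hy, sq_nonneg (x-1), mul_nonneg (mul_nonneg hy hy) hy,
      mul_nonneg (mul_nonneg (mul_nonneg hy hy) hy) hy]
  have hQ' : a * ((1 + x) * (0.6931472 + (x - 1) / 2))
      < a * (x + 0.627 * x^2 / 2 + 0.627^2 * x^3 / 6 + 0.627^3 * x^4 / 24) :=
    mul_lt_mul_of_pos_left hQ ha0
  have hlog : a * (1 + x) * Real.log (1 + x)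
      ≤ a * ((1 + x) * (0.6931472 + (x - 1) / 2)) := by
    have h := mul_le_mul_of_nonneg_left hL (le_of_lt (mul_pos ha0 hx0))
    nlinarith [h]
  have hmid : a * (x + 0.627 * x^2 / 2 + 0.627^2 * x^3 / 6 + 0.627^3 * x^4 / 24)
      = a * x + (a * 0.627 * x^2) / 2 + (a * 0.627^2 * x^3) / 6
        + (a * 0.627^3 * x^4) / 24 := by ring
  have hfin : a * x + a^2 * x^2 / 2 + a^3 * x^3 / 6 + a^4 * x^4 / 24
      ≤ Real.exp (a * x) - 1 := by nlinarith [hexp]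
  calc a * (1 + x) * Real.log (1 + x)
      ≤ a * ((1 + x) * (0.6931472 + (x - 1) / 2)) := hlog
    _ < a * (x + 0.627 * x^2 / 2 + 0.627^2 * x^3 / 6 + 0.627^3 * x^4 / 24) := hQ'
    _ ≤ a * x + a^2 * x^2 / 2 + a^3 * x^3 / 6 + a^4 * x^4 / 24 := by
        rw [hmid]; linarith [hA2, hA3, hA4]
    _ ≤ Real.exp (a * x) - 1 := hfin

theorem stmt_0 (a : ℝ) (ha : 0.627 ≤ a) :
    StrictAntiOn (fun x : ℝ => (1 - Real.exp (-a * x)) / Real.log (1 + x))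
      (Set.Ici 1) := by
  have ha0 : (0:ℝ) < a := by norm_num at ha ⊢; linarith
  apply strictAntiOn_of_deriv_neg (convex_Ici 1)
  · -- continuity
    apply ContinuousOn.div
    · fun_prop
    · apply ContinuousOn.log (by fun_prop)
      intro x hx
      have hx1 : (1:ℝ) ≤ x := hx
      exact ne_of_gt (by linarith)
    · intro x hx
      have hx1 : (1:ℝ) ≤ x := hx
      exact ne_of_gt (Real.log_pos (by linarith))
  · intro x hx
    rw [interior_Ici] at hx
    have hx1 : (1:ℝ) < x := hx
    have hx0 : (0:ℝ) < 1 + x := by linarith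
    have hlogpos : 0 < Real.log (1 + x) := Real.log_pos (by linarith)
    have hE : (0:ℝ) < Real.exp (-a * x) := Real.exp_pos _
    -- derivative of numerator
    have hu : HasDerivAt (fun x : ℝ => 1 - Real.exp (-a * x))
        (a * Real.exp (-a * x)) x := by
      have h1 : HasDerivAt (fun x : ℝ => -a * x) (-a) x := by
        simpa using (hasDerivAt_id x).const_mul (-a)
      have h3 := (h1.exp).const_sub 1
      exact h3.congr_deriv (by ring)
    -- derivative of denominator
    have hv : HasDerivAt (fun x : ℝ => Real.log (1 + x)) (1 / (1 + x)) x := by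
      have h1 : HasDerivAt (fun x : ℝ => 1 + x) 1 x := by
        simpa using (hasDerivAt_id x).const_add 1
      simpa using h1.log (ne_of_gt hx0)
    have hdiv := hu.div hv (ne_of_gt hlogpos)
    rw [show (fun x : ℝ => (1 - Real.exp (-a * x)) / Real.log (1 + x))
        = ((fun x : ℝ => 1 - Real.exp (-a * x)) / fun x : ℝ => Real.log (1 + x)) from rfl,
      hdiv.deriv]
    -- negativity of numerator of the quotient
    have hkey := key_ineq a x ha (le_of_lt hx1)
    have hprod : Real.exp (-a * x) * Real.exp (a * x) = 1 := by
      rw [← Real.exp_add]; norm_num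
    have hmul : Real.exp (-a * x) * (a * (1 + x) * Real.log (1 + x))
        < Real.exp (-a * x) * (Real.exp (a * x) - 1) :=
      mul_lt_mul_of_pos_left hkey hE
    have hN : a * Real.exp (-a * x) * Real.log (1 + x) * (1 + x)
        < 1 - Real.exp (-a * x) := by nlinarith [hmul, hprod]
    have hNum : a * Real.exp (-a * x) * Real.log (1 + x)
        - (1 - Real.exp (-a * x)) * (1 / (1 + x)) < 0 := by
      have h2 : (1 - Real.exp (-a * x)) * (1 / (1 + x))
          = (1 - Real.exp (-a * x)) / (1 + x) := by ring
      rw [sub_neg, h2, lt_div_iff₀ hx0]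
      linarith [hN]
    apply div_neg_of_neg_of_pos
    · nlinarith [hNum]
    · positivity
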